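/- Work in the formal power series ring ℚ[[x₁, x₂, x₃, x₄]]. For each i let Tᵢ be the multiplicative inverse of the power series (1 − exp(−xᵢ))/xᵢ = Σ_{k≥0} (−1)^k xᵢ^k/(k+1)! (which has constant term 1), and let e₁, e₂, e₃, e₄ be the elementary symmetric polynomials in x₁, …, x₄. Then the homogeneous degree-4 component of (Σ_{1≤i<j≤4} exp(−xᵢ − xⱼ))·T₁T₂T₃T₄ equals (−6e₁⁴ + 24e₁²e₂ + 18e₂² − 114e₁e₃ + 474e₄)/720. -/

import Mathlib

/-- The formal power series `(1 - exp (-xᵢ))/xᵢ = ∑ₖ (-1)^k xᵢ^k / (k+1)!` in `ℚ[[x₁,…,x₄]]`. -/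
noncomputable def oneSubExpNegDivX (i : Fin 4) : MvPowerSeries (Fin 4) ℚ :=
  fun d => if d.support ⊆ {i} then (-1 : ℚ) ^ (d i) / ((d i + 1).factorial : ℚ) else 0

/-- The formal power series `exp (-∑_{i ∈ s} xᵢ)` in `ℚ[[x₁,…,x₄]]`: the coefficient of the
monomial `∏ᵢ xᵢ^(dᵢ)` (with all variables occurring lying in `s`) is `(-1)^(∑ dᵢ) / ∏ᵢ (dᵢ)!`. -/
noncomputable def expNegSum (s : Finset (Fin 4)) : MvPowerSeries (Fin 4) ℚ :=
  fun d => if d.support ⊆ s then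
    (-1 : ℚ) ^ (d.sum fun _ n => n) / (d.prod fun _ n => (n.factorial : ℚ)) else 0

/-- The homogeneous degree-4 component of a formal power series in `ℚ[[x₁,…,x₄]]`. -/
noncomputable def homogeneousComponent4 (F : MvPowerSeries (Fin 4) ℚ) :
    MvPowerSeries (Fin 4) ℚ :=
  fun d => if (d.sum fun _ n => n) = 4 then MvPowerSeries.coeff d F else 0

/-- The `k`-th elementary symmetric polynomial in `x₁, …, x₄`, viewed as a power series. -/
noncomputable def esymmPS (k : ℕ) : MvPowerSeries (Fin 4) ℚ :=
  ((MvPolynomial.esymm (Fin 4) ℚ k : MvPolynomial (Fin 4) ℚ) : MvPowerSeries (Fin 4) ℚ)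


open MvPowerSeries Finset

noncomputable section


def eC (n : ℕ) : ℚ := (-1) ^ n / n.factorial
def gC (n : ℕ) : ℚ := (-1) ^ n / (n + 1).factorial
def conv (f g : ℕ → ℚ) (n : ℕ) : ℚ := ∑ p ∈ Finset.HasAntidiagonal.antidiagonal n, f p.1 * g p.2

def tC : ℕ → ℚ
  | 0 => 1
  | (n + 1) => -∑ a ∈ (Finset.range (n + 1)).attach, tC a.1 * gC (n + 1 - a.1)
  decreasing_by have := Finset.mem_range.mp a.2; omega

lemma tC_zero : tC 0 = 1 := by rw [tC]
lemma tC_succ (n : ℕ) :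
    tC (n + 1) = -∑ a ∈ Finset.range (n + 1), tC a * gC (n + 1 - a) := by
  rw [tC, Finset.sum_attach (Finset.range (n + 1)) (fun a => tC a * gC (n + 1 - a))]

def vC : ℕ → ℚ := conv eC tC

def unary (k : Fin 4) (f : ℕ → ℚ) : MvPowerSeries (Fin 4) ℚ :=
  fun d => if d.support ⊆ {k} then f (d k) else 0

lemma coeff_unary (k : Fin 4) (f : ℕ → ℚ) (d : Fin 4 →₀ ℕ) :
    MvPowerSeries.coeff d (unary k f) = if d.support ⊆ {k} then f (d k) else 0 := rfl

def Supp (S : Finset (Fin 4)) (φ : MvPowerSeries (Fin 4) ℚ) : Prop :=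
  ∀ d : Fin 4 →₀ ℕ, ¬ (d.support ⊆ S) → MvPowerSeries.coeff d φ = 0

lemma supp_unary (k : Fin 4) (f : ℕ → ℚ) : Supp {k} (unary k f) := by
  intro d hd
  rw [coeff_unary, if_neg hd]

lemma Supp.mono {S T : Finset (Fin 4)} {φ} (h : Supp S φ) (hST : S ⊆ T) : Supp T φ := by
  intro d hd
  exact h d (fun hsub => hd (hsub.trans hST))

lemma Supp.mul {S T : Finset (Fin 4)} {φ ψ} (hφ : Supp S φ) (hψ : Supp T ψ) :
    Supp (S ∪ T) (φ * ψ) := by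
  intro d hd
  rw [MvPowerSeries.coeff_mul]
  refine Finset.sum_eq_zero fun p hp => ?_
  rw [Finset.HasAntidiagonal.mem_antidiagonal] at hp
  by_cases h1 : p.1.support ⊆ S
  · by_cases h2 : p.2.support ⊆ T
    · exfalso
      apply hd
      rw [← hp]
      refine (Finsupp.support_add).trans ?_
      exact Finset.union_subset_union h1 h2
    · rw [hψ _ h2, mul_zero]
  · rw [hφ _ h1, zero_mul]

lemma coeff_mul_disjoint {S : Finset (Fin 4)} {φ ψ} (hφ : Supp S φ) (hψ : Supp Sᶜ ψ)
    (d : Fin 4 →₀ ℕ) :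
    MvPowerSeries.coeff d (φ * ψ) =
      MvPowerSeries.coeff (d.filter (· ∈ S)) φ *
        MvPowerSeries.coeff (d.filter (· ∉ S)) ψ := by
  classical
  rw [MvPowerSeries.coeff_mul]
  rw [Finset.sum_eq_single (d.filter (· ∈ S), d.filter (· ∉ S))]
  · intro p hp hne
    rw [Finset.HasAntidiagonal.mem_antidiagonal] at hp
    by_cases h1 : p.1.support ⊆ S
    · by_cases h2 : p.2.support ⊆ Sᶜ
      · exfalso
        apply hne
        have h1' : p.1 = d.filter (· ∈ S) := by
          ext i
          rw [Finsupp.filter_apply]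
          by_cases hi : i ∈ S
          · have : p.2 i = 0 := by
              by_contra hne0
              exact (Finset.mem_compl.mp (h2 (Finsupp.mem_support_iff.mpr hne0))) hi
            rw [if_pos hi, ← hp, Finsupp.add_apply, this, add_zero]
          · have : p.1 i = 0 := by
              by_contra hne0
              exact hi (h1 (Finsupp.mem_support_iff.mpr hne0))
            rw [if_neg hi, this]
        have h2' : p.2 = d.filter (· ∉ S) := by
          ext i
          rw [Finsupp.filter_apply]
          by_cases hi : i ∈ S
          · have : p.2 i = 0 := by
              by_contra hne0
              exact (Finset.mem_compl.mp (h2 (Finsupp.mem_support_iff.mpr hne0))) hi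
            simp [hi, this]
          · have : p.1 i = 0 := by
              by_contra hne0
              exact hi (h1 (Finsupp.mem_support_iff.mpr hne0))
            rw [if_pos hi, ← hp, Finsupp.add_apply, this, zero_add]
        rw [Prod.ext_iff]
        exact ⟨h1', h2'⟩
      · rw [hψ _ h2, mul_zero]
    · rw [hφ _ h1, zero_mul]
  · intro h
    exfalso
    apply h
    rw [Finset.HasAntidiagonal.mem_antidiagonal]
    exact Finsupp.filter_pos_add_filter_neg _ _

lemma unary_mul_unary_same (k : Fin 4) (f g : ℕ → ℚ) :
    unary k f * unary k g = unary k (conv f g) := by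
  ext d
  rw [MvPowerSeries.coeff_mul, coeff_unary]
  by_cases hd : d.support ⊆ {k}
  · rw [if_pos hd]
    have hdk : d = Finsupp.single k (d k) := Finsupp.support_subset_singleton.mp hd
    rw [hdk, Finsupp.antidiagonal_single, Finset.sum_map]
    simp only [Function.Embedding.coe_prodMap, Function.Embedding.coeFn_mk, Prod.map_apply,
      Prod.map_fst, Prod.map_snd]
    rw [Finsupp.single_eq_same, conv]
    refine Finset.sum_congr rfl fun p _ => ?_
    simp only [coeff_unary]
    rw [if_pos Finsupp.support_single_subset, if_pos Finsupp.support_single_subset]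
    rw [Finsupp.single_eq_same, Finsupp.single_eq_same]
  · rw [if_neg hd]
    refine Finset.sum_eq_zero fun p hp => ?_
    rw [Finset.HasAntidiagonal.mem_antidiagonal] at hp
    by_cases h1 : p.1.support ⊆ {k}
    · by_cases h2 : p.2.support ⊆ {k}
      · exfalso
        apply hd
        rw [← hp]
        exact Finsupp.support_add.trans (Finset.union_subset h1 h2)
      · rw [coeff_unary k g p.2, if_neg h2, mul_zero]
    · rw [coeff_unary k f p.1, if_neg h1, zero_mul]

def ind (a : ℕ) : ℕ → ℚ := fun n => if n = a then 1 else 0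

lemma unary_ind_zero (k : Fin 4) : unary k (ind 0) = 1 := by
  ext d
  rw [coeff_unary, MvPowerSeries.coeff_one]
  by_cases hd : d = 0
  · subst hd; simp [ind]
  · rw [if_neg hd]
    by_cases hs : d.support ⊆ {k}
    · rw [if_pos hs, ind]
      rw [if_neg]
      intro h0
      apply hd
      have := Finsupp.support_subset_singleton.mp hs
      rw [this, h0, Finsupp.single_zero]
    · rw [if_neg hs]

lemma conv_ind_zero_left (f : ℕ → ℚ) : conv (ind 0) f = f := by
  funext n
  rw [conv, Finset.sum_eq_single (0, n)]
  · simp [ind]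
  · rintro ⟨a, b⟩ hp hne
    rw [Finset.HasAntidiagonal.mem_antidiagonal] at hp
    have : a ≠ 0 := fun h => hne (by simp [h, ← hp])
    simp [ind, this]
  · intro h; exact absurd (Finset.HasAntidiagonal.mem_antidiagonal.mpr (by simp)) h

lemma conv_ind_ind (a b : ℕ) : conv (ind a) (ind b) = ind (a + b) := by
  funext n
  rw [conv]
  by_cases hn : n = a + b
  · subst hn
    rw [Finset.sum_eq_single (a, b)]
    · simp [ind]
    · rintro ⟨x, y⟩ hp hne
      rw [Finset.HasAntidiagonal.mem_antidiagonal] at hp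
      rcases eq_or_ne x a with hx | hx
      · have : y ≠ b := fun h => hne (by rw [hx, h])
        simp [ind, this]
      · simp [ind, hx]
    · intro h
      exact absurd (Finset.HasAntidiagonal.mem_antidiagonal.mpr (rfl : (a, b).1 + (a, b).2 = a + b)) h
  · rw [ind, if_neg hn]
    refine Finset.sum_eq_zero fun p hp => ?_
    rw [Finset.HasAntidiagonal.mem_antidiagonal] at hp
    rcases eq_or_ne p.1 a with hx | hx
    · have : p.2 ≠ b := fun h => hn (by rw [← hp, hx, h])
      simp [ind, this]
    · simp [ind, hx]

lemma coeff_unary_of {k : Fin 4} {f : ℕ → ℚ} {d : Fin 4 →₀ ℕ} (h : d.support ⊆ {k}) :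
    MvPowerSeries.coeff d (unary k f) = f (d k) := by
  rw [coeff_unary, if_pos h]

lemma filter_support_subset (d : Fin 4 →₀ ℕ) (S : Finset (Fin 4)) :
    (d.filter (· ∈ S)).support ⊆ S := by
  intro x hx
  rw [Finsupp.support_filter, Finset.mem_filter] at hx
  exact hx.2

lemma coeff_quaternary (f0 f1 f2 f3 : ℕ → ℚ) (d : Fin 4 →₀ ℕ) :
    MvPowerSeries.coeff d (unary 0 f0 * unary 1 f1 * unary 2 f2 * unary 3 f3) =
      f0 (d 0) * f1 (d 1) * f2 (d 2) * f3 (d 3) := by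
  rw [mul_assoc, mul_assoc]
  rw [coeff_mul_disjoint (supp_unary 0 f0)
    (((supp_unary 1 f1).mul ((supp_unary 2 f2).mul (supp_unary 3 f3))).mono (by decide))]
  rw [coeff_mul_disjoint (supp_unary 1 f1)
    (((supp_unary 2 f2).mul (supp_unary 3 f3)).mono (by decide))]
  rw [coeff_mul_disjoint (supp_unary 2 f2) ((supp_unary 3 f3).mono (by decide))]
  rw [coeff_unary_of (filter_support_subset _ _), coeff_unary_of (filter_support_subset _ _),
    coeff_unary_of (filter_support_subset _ _)]
  rw [coeff_unary_of (k := 3) (by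
    intro x hx
    rw [Finsupp.mem_support_iff] at hx
    simp only [Finsupp.filter_apply] at hx
    fin_cases x <;> simp_all)]
  simp only [Finsupp.filter_apply]
  norm_num
  rw [if_neg (show ((2 : Fin 4)) ≠ 1 by decide), if_neg (show ((2 : Fin 4)) ≠ 0 by decide),
    if_neg (show ((3 : Fin 4)) ≠ 2 by decide), if_neg (show ((3 : Fin 4)) ≠ 1 by decide),
    if_neg (show ((3 : Fin 4)) ≠ 0 by decide)]
  ring

lemma quaternary_mul (a0 a1 a2 a3 b0 b1 b2 b3 : ℕ → ℚ) :
    (unary 0 a0 * unary 1 a1 * unary 2 a2 * unary 3 a3) *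
      (unary 0 b0 * unary 1 b1 * unary 2 b2 * unary 3 b3) =
    unary 0 (conv a0 b0) * unary 1 (conv a1 b1) * unary 2 (conv a2 b2) *
      unary 3 (conv a3 b3) := by
  rw [← unary_mul_unary_same, ← unary_mul_unary_same, ← unary_mul_unary_same,
    ← unary_mul_unary_same]
  ring

lemma expNegSum_eq (s : Finset (Fin 4)) :
    expNegSum s = unary 0 (if (0 : Fin 4) ∈ s then eC else ind 0) *
      unary 1 (if (1 : Fin 4) ∈ s then eC else ind 0) *
      unary 2 (if (2 : Fin 4) ∈ s then eC else ind 0) *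
      unary 3 (if (3 : Fin 4) ∈ s then eC else ind 0) := by
  ext d
  rw [coeff_quaternary]
  by_cases hd : d.support ⊆ s
  · have hL : MvPowerSeries.coeff d (expNegSum s) =
        (-1 : ℚ) ^ (d.sum fun _ n => n) / (d.prod fun _ n => (n.factorial : ℚ)) := by
      rw [MvPowerSeries.coeff_apply, expNegSum, if_pos hd]
    have hfac : ∀ k : Fin 4, (if k ∈ s then eC else ind 0) (d k) = eC (d k) := by
      intro k
      by_cases hk : k ∈ s
      · rw [if_pos hk]
      · rw [if_neg hk]
        have hk0 : d k = 0 := by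
          by_contra h
          exact hk (hd (Finsupp.mem_support_iff.mpr h))
        rw [hk0]
        simp [ind, eC]
    rw [hL, hfac 0, hfac 1, hfac 2, hfac 3]
    rw [Finsupp.sum_fintype _ _ (fun i => rfl),
      Finsupp.prod_fintype _ _ (fun i => by simp)]
    rw [Fin.sum_univ_four, Fin.prod_univ_four]
    simp only [eC]
    rw [div_mul_div_comm, div_mul_div_comm, div_mul_div_comm, pow_add, pow_add, pow_add]
  · have hL : MvPowerSeries.coeff d (expNegSum s) = 0 := by
      rw [MvPowerSeries.coeff_apply, expNegSum, if_neg hd]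
    rw [hL]
    obtain ⟨k, hk, hks⟩ := Finset.not_subset.mp hd
    have hdk : d k ≠ 0 := Finsupp.mem_support_iff.mp hk
    fin_cases k <;> simp_all [ind]

lemma oneSubExpNegDivX_eq (i : Fin 4) : oneSubExpNegDivX i = unary i gC := rfl

lemma conv_tC_gC : conv tC gC = ind 0 := by
  funext n
  cases n with
  | zero => simp [conv, ind, tC_zero, gC]
  | succ m =>
    rw [conv, Finset.Nat.sum_antidiagonal_eq_sum_range_succ_mk, Finset.sum_range_succ]
    have : gC (m + 1 - (m + 1)) = 1 := by simp [gC]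
    rw [this, mul_one, tC_succ]
    simp [ind]

lemma Td_mul (i : Fin 4) : unary i tC * oneSubExpNegDivX i = 1 := by
  rw [oneSubExpNegDivX_eq, unary_mul_unary_same, conv_tC_gC, unary_ind_zero]

lemma T_eq_Td (T : Fin 4 → MvPowerSeries (Fin 4) ℚ)
    (hT : ∀ i, T i * oneSubExpNegDivX i = 1) (i : Fin 4) : T i = unary i tC := by
  calc T i = T i * (unary i tC * oneSubExpNegDivX i) := by rw [Td_mul, mul_one]
    _ = (T i * oneSubExpNegDivX i) * unary i tC := by ring
    _ = unary i tC := by rw [hT, one_mul]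

lemma X_eq_unary (k : Fin 4) :
    (MvPowerSeries.X k : MvPowerSeries (Fin 4) ℚ) = unary k (ind 1) := by
  ext d
  rw [MvPowerSeries.coeff_X, coeff_unary]
  by_cases hs : d.support ⊆ {k}
  · rw [if_pos hs]
    have hdk := Finsupp.support_subset_singleton.mp hs
    by_cases h1 : d k = 1
    · rw [if_pos (by rw [hdk, h1]), ind, if_pos h1]
    · rw [ind, if_neg h1, if_neg (fun hh => h1 (by rw [hh, Finsupp.single_eq_same]))]
  · rw [if_neg hs, if_neg (fun hh => hs (by rw [hh]; exact Finsupp.support_single_subset))]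

lemma X_pow_eq_unary (k : Fin 4) (a : ℕ) :
    (MvPowerSeries.X k : MvPowerSeries (Fin 4) ℚ) ^ a = unary k (ind a) := by
  induction a with
  | zero => rw [pow_zero, unary_ind_zero]
  | succ m ih =>
    rw [pow_succ, ih, X_eq_unary, unary_mul_unary_same, conv_ind_ind]
lemma esymmPS_one : esymmPS 1 = X 0 + X 1 + X 2 + X 3 := by
  have hset : powersetCard 1 (univ : Finset (Fin 4)) = {{0}, {1}, {2}, {3}} := by decide
  rw [esymmPS, MvPolynomial.esymm, hset]
  rw [Finset.sum_insert (by decide), Finset.sum_insert (by decide),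
    Finset.sum_insert (by decide), Finset.sum_singleton]
  simp only [Finset.prod_singleton]
  push_cast [MvPolynomial.coe_add, MvPolynomial.coe_X]
  ring

lemma esymmPS_two : esymmPS 2 = X 0 * X 1 + X 0 * X 2 + X 0 * X 3 + X 1 * X 2 + X 1 * X 3
    + X 2 * X 3 := by
  have hset : powersetCard 2 (univ : Finset (Fin 4)) =
      {{0, 1}, {0, 2}, {0, 3}, {1, 2}, {1, 3}, {2, 3}} := by decide
  rw [esymmPS, MvPolynomial.esymm, hset]
  rw [Finset.sum_insert (by decide), Finset.sum_insert (by decide),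
    Finset.sum_insert (by decide), Finset.sum_insert (by decide),
    Finset.sum_insert (by decide), Finset.sum_singleton]
  rw [Finset.prod_insert (by decide), Finset.prod_insert (by decide),
    Finset.prod_insert (by decide), Finset.prod_insert (by decide),
    Finset.prod_insert (by decide), Finset.prod_insert (by decide)]
  simp only [Finset.prod_singleton]
  push_cast [MvPolynomial.coe_add, MvPolynomial.coe_mul, MvPolynomial.coe_X]
  ring

lemma esymmPS_three : esymmPS 3 = X 0 * X 1 * X 2 + X 0 * X 1 * X 3 + X 0 * X 2 * X 3
    + X 1 * X 2 * X 3 := by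
  have hset : powersetCard 3 (univ : Finset (Fin 4)) =
      {{0, 1, 2}, {0, 1, 3}, {0, 2, 3}, {1, 2, 3}} := by decide
  rw [esymmPS, MvPolynomial.esymm, hset]
  rw [Finset.sum_insert (by decide), Finset.sum_insert (by decide),
    Finset.sum_insert (by decide), Finset.sum_singleton]
  rw [Finset.prod_insert (by decide), Finset.prod_insert (by decide),
    Finset.prod_insert (by decide), Finset.prod_insert (by decide),
    Finset.prod_insert (by decide), Finset.prod_insert (by decide),
    Finset.prod_insert (by decide), Finset.prod_insert (by decide)]
  simp only [Finset.prod_singleton]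
  push_cast [MvPolynomial.coe_add, MvPolynomial.coe_mul, MvPolynomial.coe_X]
  ring

lemma esymmPS_four : esymmPS 4 = X 0 * X 1 * X 2 * X 3 := by
  have hset : powersetCard 4 (univ : Finset (Fin 4)) = {{0, 1, 2, 3}} := by decide
  rw [esymmPS, MvPolynomial.esymm, hset, Finset.sum_singleton]
  rw [Finset.prod_insert (by decide), Finset.prod_insert (by decide),
    Finset.prod_insert (by decide)]
  simp only [Finset.prod_singleton]
  push_cast [MvPolynomial.coe_mul, MvPolynomial.coe_X]
  ring

noncomputable def Mo (a b c e : ℕ) : MvPowerSeries (Fin 4) ℚ :=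
  X 0 ^ a * X 1 ^ b * X 2 ^ c * X 3 ^ e

lemma inner_expand :
    -6 * (esymmPS 1) ^ 4 + 24 * (esymmPS 1) ^ 2 * esymmPS 2 + 18 * (esymmPS 2) ^ 2
      - 114 * esymmPS 1 * esymmPS 3 + 474 * esymmPS 4 =
    (-6 : ℚ) • (Mo 4 0 0 0 + Mo 0 4 0 0 + Mo 0 0 4 0 + Mo 0 0 0 4)
    + (30 : ℚ) • (Mo 2 2 0 0 + Mo 2 0 2 0 + Mo 2 0 0 2 + Mo 0 2 2 0 + Mo 0 2 0 2 + Mo 0 0 2 2)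
    - (30 : ℚ) • (Mo 2 1 1 0 + Mo 2 1 0 1 + Mo 2 0 1 1 + Mo 1 2 1 0 + Mo 1 2 0 1 + Mo 0 2 1 1
        + Mo 1 1 2 0 + Mo 1 0 2 1 + Mo 0 1 2 1 + Mo 1 1 0 2 + Mo 1 0 1 2 + Mo 0 1 1 2)
    + (270 : ℚ) • Mo 1 1 1 1 := by
  rw [esymmPS_one, esymmPS_two, esymmPS_three, esymmPS_four]
  simp only [Mo, Algebra.smul_def, map_neg, map_ofNat]
  ring

lemma coeff_Mo (a b c e : ℕ) (d : Fin 4 →₀ ℕ) :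
    MvPowerSeries.coeff d (Mo a b c e) =
      if d 0 = a ∧ d 1 = b ∧ d 2 = c ∧ d 3 = e then 1 else 0 := by
  rw [Mo, X_pow_eq_unary, X_pow_eq_unary, X_pow_eq_unary, X_pow_eq_unary, coeff_quaternary]
  simp only [ind]
  by_cases h0 : d 0 = a <;> by_cases h1 : d 1 = b <;> by_cases h2 : d 2 = c <;>
    by_cases h3 : d 3 = e <;> simp [h0, h1, h2, h3]

lemma eC_0 : eC 0 = 1 := by norm_num [eC]
lemma eC_1 : eC 1 = -1 := by norm_num [eC]
lemma eC_2 : eC 2 = 1/2 := by norm_num [eC, Nat.factorial]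
lemma eC_3 : eC 3 = -1/6 := by norm_num [eC, Nat.factorial]
lemma eC_4 : eC 4 = 1/24 := by norm_num [eC, Nat.factorial]
lemma gC_0 : gC 0 = 1 := by norm_num [gC]
lemma gC_1 : gC 1 = -1/2 := by norm_num [gC, Nat.factorial]
lemma gC_2 : gC 2 = 1/6 := by norm_num [gC, Nat.factorial]
lemma gC_3 : gC 3 = -1/24 := by norm_num [gC, Nat.factorial]
lemma gC_4 : gC 4 = 1/120 := by norm_num [gC, Nat.factorial]

lemma tC_1 : tC 1 = 1/2 := by
  rw [show (1:ℕ) = 0 + 1 from rfl, tC_succ]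
  norm_num [Finset.sum_range_one, tC_zero, gC_1]
lemma tC_2 : tC 2 = 1/12 := by
  rw [show (2:ℕ) = 1 + 1 from rfl, tC_succ]
  norm_num [Finset.sum_range_succ, Finset.sum_range_one, tC_zero, tC_1, gC_1, gC_2]
lemma tC_3 : tC 3 = 0 := by
  rw [show (3:ℕ) = 2 + 1 from rfl, tC_succ]
  norm_num [Finset.sum_range_succ, Finset.sum_range_one, tC_zero, tC_1, tC_2, gC_1, gC_2, gC_3]
lemma tC_4 : tC 4 = -1/720 := by
  rw [show (4:ℕ) = 3 + 1 from rfl, tC_succ]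
  norm_num [Finset.sum_range_succ, Finset.sum_range_one, tC_zero, tC_1, tC_2, tC_3,
    gC_1, gC_2, gC_3, gC_4]

lemma vC_eval (n : ℕ) : vC n = ∑ i ∈ Finset.range (n + 1), eC i * tC (n - i) := by
  rw [vC, conv, Finset.Nat.sum_antidiagonal_eq_sum_range_succ_mk]
lemma vC_0 : vC 0 = 1 := by norm_num [vC_eval, Finset.sum_range_one, eC_0, tC_zero]
lemma vC_1 : vC 1 = -1/2 := by
  norm_num [vC_eval, Finset.sum_range_succ, Finset.sum_range_one, eC_0, eC_1, tC_zero, tC_1]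
lemma vC_2 : vC 2 = 1/12 := by
  norm_num [vC_eval, Finset.sum_range_succ, Finset.sum_range_one, eC_0, eC_1, eC_2,
    tC_zero, tC_1, tC_2]
lemma vC_3 : vC 3 = 0 := by
  norm_num [vC_eval, Finset.sum_range_succ, Finset.sum_range_one, eC_0, eC_1, eC_2, eC_3,
    tC_zero, tC_1, tC_2, tC_3]
lemma vC_4 : vC 4 = -1/720 := by
  norm_num [vC_eval, Finset.sum_range_succ, Finset.sum_range_one, eC_0, eC_1, eC_2, eC_3, eC_4,
    tC_zero, tC_1, tC_2, tC_3, tC_4]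

lemma hE01 : expNegSum ({0, 1} : Finset (Fin 4)) *
      (unary 0 tC * unary 1 tC * unary 2 tC * unary 3 tC) =
    unary 0 vC * unary 1 vC * unary 2 tC * unary 3 tC := by
  rw [show expNegSum ({0, 1} : Finset (Fin 4)) =
      unary 0 eC * unary 1 eC * unary 2 (ind 0) * unary 3 (ind 0) from by
    rw [expNegSum_eq, if_pos (by decide), if_pos (by decide), if_neg (by decide), if_neg (by decide)]]
  rw [quaternary_mul]
  rw [show conv eC tC = vC from rfl]
  simp only [conv_ind_zero_left]

lemma hE02 : expNegSum ({0, 2} : Finset (Fin 4)) *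
      (unary 0 tC * unary 1 tC * unary 2 tC * unary 3 tC) =
    unary 0 vC * unary 1 tC * unary 2 vC * unary 3 tC := by
  rw [show expNegSum ({0, 2} : Finset (Fin 4)) =
      unary 0 eC * unary 1 (ind 0) * unary 2 eC * unary 3 (ind 0) from by
    rw [expNegSum_eq, if_pos (by decide), if_neg (by decide), if_pos (by decide), if_neg (by decide)]]
  rw [quaternary_mul]
  rw [show conv eC tC = vC from rfl]
  simp only [conv_ind_zero_left]

lemma hE03 : expNegSum ({0, 3} : Finset (Fin 4)) *
      (unary 0 tC * unary 1 tC * unary 2 tC * unary 3 tC) =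
    unary 0 vC * unary 1 tC * unary 2 tC * unary 3 vC := by
  rw [show expNegSum ({0, 3} : Finset (Fin 4)) =
      unary 0 eC * unary 1 (ind 0) * unary 2 (ind 0) * unary 3 eC from by
    rw [expNegSum_eq, if_pos (by decide), if_neg (by decide), if_neg (by decide), if_pos (by decide)]]
  rw [quaternary_mul]
  rw [show conv eC tC = vC from rfl]
  simp only [conv_ind_zero_left]

lemma hE12 : expNegSum ({1, 2} : Finset (Fin 4)) *
      (unary 0 tC * unary 1 tC * unary 2 tC * unary 3 tC) =
    unary 0 tC * unary 1 vC * unary 2 vC * unary 3 tC := by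
  rw [show expNegSum ({1, 2} : Finset (Fin 4)) =
      unary 0 (ind 0) * unary 1 eC * unary 2 eC * unary 3 (ind 0) from by
    rw [expNegSum_eq, if_neg (by decide), if_pos (by decide), if_pos (by decide), if_neg (by decide)]]
  rw [quaternary_mul]
  rw [show conv eC tC = vC from rfl]
  simp only [conv_ind_zero_left]

lemma hE13 : expNegSum ({1, 3} : Finset (Fin 4)) *
      (unary 0 tC * unary 1 tC * unary 2 tC * unary 3 tC) =
    unary 0 tC * unary 1 vC * unary 2 tC * unary 3 vC := by
  rw [show expNegSum ({1, 3} : Finset (Fin 4)) =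
      unary 0 (ind 0) * unary 1 eC * unary 2 (ind 0) * unary 3 eC from by
    rw [expNegSum_eq, if_neg (by decide), if_pos (by decide), if_neg (by decide), if_pos (by decide)]]
  rw [quaternary_mul]
  rw [show conv eC tC = vC from rfl]
  simp only [conv_ind_zero_left]

lemma hE23 : expNegSum ({2, 3} : Finset (Fin 4)) *
      (unary 0 tC * unary 1 tC * unary 2 tC * unary 3 tC) =
    unary 0 tC * unary 1 tC * unary 2 vC * unary 3 vC := by
  rw [show expNegSum ({2, 3} : Finset (Fin 4)) =
      unary 0 (ind 0) * unary 1 (ind 0) * unary 2 eC * unary 3 eC from by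
    rw [expNegSum_eq, if_neg (by decide), if_neg (by decide), if_pos (by decide), if_pos (by decide)]]
  rw [quaternary_mul]
  rw [show conv eC tC = vC from rfl]
  simp only [conv_ind_zero_left]

theorem hrr_omega_two_degree_four
    (T : Fin 4 → MvPowerSeries (Fin 4) ℚ)
    (hT : ∀ i, T i * oneSubExpNegDivX i = 1) :
    homogeneousComponent4
        ((∑ p ∈ Finset.univ.filter (fun p : Fin 4 × Fin 4 => p.1 < p.2),
            expNegSum {p.1, p.2}) * (T 0 * T 1 * T 2 * T 3)) =
      (720 : ℚ)⁻¹ •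
        (-6 * (esymmPS 1) ^ 4 + 24 * (esymmPS 1) ^ 2 * esymmPS 2 + 18 * (esymmPS 2) ^ 2
          - 114 * esymmPS 1 * esymmPS 3 + 474 * esymmPS 4) := by
  have hTT : T 0 * T 1 * T 2 * T 3 = unary 0 tC * unary 1 tC * unary 2 tC * unary 3 tC := by
    rw [T_eq_Td T hT 0, T_eq_Td T hT 1, T_eq_Td T hT 2, T_eq_Td T hT 3]
  have hpairs : Finset.univ.filter (fun p : Fin 4 × Fin 4 => p.1 < p.2) =
      ({((0:Fin 4),(1:Fin 4)), (0,2), (0,3), (1,2), (1,3), (2,3)} :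
        Finset (Fin 4 × Fin 4)) := by decide
  ext d
  rw [show MvPowerSeries.coeff d (homogeneousComponent4
        ((∑ p ∈ Finset.univ.filter (fun p : Fin 4 × Fin 4 => p.1 < p.2),
            expNegSum {p.1, p.2}) * (T 0 * T 1 * T 2 * T 3))) =
      if (d.sum fun _ n => n) = 4 then MvPowerSeries.coeff d
        ((∑ p ∈ Finset.univ.filter (fun p : Fin 4 × Fin 4 => p.1 < p.2),
            expNegSum {p.1, p.2}) * (T 0 * T 1 * T 2 * T 3)) else 0 from rfl]
  rw [hpairs, hTT]
  rw [Finset.sum_insert (by decide), Finset.sum_insert (by decide),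
    Finset.sum_insert (by decide), Finset.sum_insert (by decide),
    Finset.sum_insert (by decide), Finset.sum_singleton]
  simp only []
  rw [add_mul, add_mul, add_mul, add_mul, add_mul]
  rw [hE01, hE02, hE03, hE12, hE13, hE23]
  rw [inner_expand]
  simp only [map_add, map_sub, LinearMap.map_smul, coeff_quaternary, coeff_Mo, smul_eq_mul]
  rw [Finsupp.sum_fintype _ _ (fun i => rfl), Fin.sum_univ_four]
  obtain ⟨n0, n1, n2, n3, h0, h1, h2, h3⟩ :
      ∃ a b c e, d 0 = a ∧ d 1 = b ∧ d 2 = c ∧ d 3 = e := ⟨_, _, _, _, rfl, rfl, rfl, rfl⟩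
  rw [h0, h1, h2, h3]
  by_cases hs : n0 + n1 + n2 + n3 = 4
  · rw [if_pos hs]
    have b0 : n0 ≤ 4 := by omega
    have b1 : n1 ≤ 4 := by omega
    have b2 : n2 ≤ 4 := by omega
    have b3 : n3 ≤ 4 := by omega
    interval_cases n0 <;> interval_cases n1 <;> interval_cases n2 <;> interval_cases n3 <;>
      first
        | (exfalso; omega)
        | norm_num [tC_zero, tC_1, tC_2, tC_3, tC_4, vC_0, vC_1, vC_2, vC_3, vC_4]
  · rw [if_neg hs]
    have hz : ∀ a b c e : ℕ, a + b + c + e = 4 →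
        (if n0 = a ∧ n1 = b ∧ n2 = c ∧ n3 = e then (1:ℚ) else 0) = 0 := by
      intro a b c e h4
      rw [if_neg]
      rintro ⟨ha, hb, hc, he⟩
      exact hs (by omega)
    rw [hz 4 0 0 0 (by norm_num), hz 0 4 0 0 (by norm_num), hz 0 0 4 0 (by norm_num), hz 0 0 0 4 (by norm_num), hz 2 2 0 0 (by norm_num), hz 2 0 2 0 (by norm_num), hz 2 0 0 2 (by norm_num), hz 0 2 2 0 (by norm_num), hz 0 2 0 2 (by norm_num), hz 0 0 2 2 (by norm_num), hz 2 1 1 0 (by norm_num), hz 2 1 0 1 (by norm_num), hz 2 0 1 1 (by norm_num), hz 1 2 1 0 (by norm_num), hz 1 2 0 1 (by norm_num), hz 0 2 1 1 (by norm_num), hz 1 1 2 0 (by norm_num), hz 1 0 2 1 (by norm_num), hz 0 1 2 1 (by norm_num), hz 1 1 0 2 (by norm_num), hz 1 0 1 2 (by norm_num), hz 0 1 1 2 (by norm_num), hz 1 1 1 1 (by norm_num)]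
    norm_num

end
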